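/- Let f_n : ℝ^d → ℝ be convex functions converging pointwise to a strictly convex function f that attains a unique minimizer x*. If x_n is a minimizer of f_n for each n, and the sequence (x_n) is bounded, then x_n → x*. -/

import Mathlib

open Filter

private lemma abs_coord_le_norm' {d : ℕ} (u : EuclideanSpace ℝ (Fin d)) (i : Fin d) :
    |u i| ≤ ‖u‖ := by
  rw [EuclideanSpace.norm_eq]
  calc |u i| = Real.sqrt (‖u i‖ ^ 2) := by
        simp [Real.norm_eq_abs, Real.sqrt_sq_eq_abs]
  _ ≤ Real.sqrt (∑ j, ‖u j‖ ^ 2) := by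
        apply Real.sqrt_le_sqrt
        exact Finset.single_le_sum (f := fun j => ‖u j‖ ^ 2)
          (fun j _ => by positivity) (Finset.mem_univ i)

/-- Decomposition of a vector as a convex combination along coordinate directions. -/
private lemma rep_sum' {d : ℕ} (hd : 0 < d) (y w : EuclideanSpace ℝ (Fin d)) :
    w = ∑ i : Fin d, ((d : ℝ)⁻¹) • (y + ((d : ℝ) * (w - y) i) • EuclideanSpace.single i (1 : ℝ)) := by
  have hd0 : (d : ℝ) ≠ 0 := Nat.cast_ne_zero.mpr hd.ne'
  have hsum : ∑ i : Fin d, (w - y) i • EuclideanSpace.single i (1 : ℝ) = w - y := by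
    simpa [EuclideanSpace.basisFun_apply, EuclideanSpace.basisFun_repr] using
      (EuclideanSpace.basisFun (Fin d) ℝ).toBasis.sum_repr (w - y)
  have key : ∑ i : Fin d, ((d : ℝ)⁻¹) • (y + ((d : ℝ) * (w - y) i) • EuclideanSpace.single i (1 : ℝ))
      = (∑ _i : Fin d, ((d : ℝ)⁻¹) • y) + ∑ i : Fin d, (w - y) i • EuclideanSpace.single i (1 : ℝ) := by
    rw [← Finset.sum_add_distrib]
    congr 1
    funext i
    rw [smul_add, smul_smul, ← mul_assoc, inv_mul_cancel₀ hd0, one_mul]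
  rw [key, hsum, Finset.sum_const, Finset.card_univ, Fintype.card_fin,
    ← Nat.cast_smul_eq_nsmul ℝ, smul_smul, mul_inv_cancel₀ hd0, one_smul]
  abel

/-- Argmin continuity: if convex `f_n` converge pointwise to a strictly convex `f` with unique
minimizer `x*`, and `x_n` are minimizers of `f_n` forming a bounded sequence, then `x_n → x*`. -/
theorem argmin_convergence {d : ℕ}
    (f : ℕ → EuclideanSpace ℝ (Fin d) → ℝ) (g : EuclideanSpace ℝ (Fin d) → ℝ)
    (hconv : ∀ n, ConvexOn ℝ Set.univ (f n))
    (hpt : ∀ x, Tendsto (fun n => f n x) atTop (nhds (g x)))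
    (hstrict : StrictConvexOn ℝ Set.univ g)
    (xstar : EuclideanSpace ℝ (Fin d))
    (hmin : ∀ y, g xstar ≤ g y)
    (huniq : ∀ y, (∀ z, g y ≤ g z) → y = xstar)
    (x : ℕ → EuclideanSpace ℝ (Fin d))
    (hx : ∀ n, ∀ y, f n (x n) ≤ f n y)
    (hbdd : ∃ C : ℝ, ∀ n, ‖x n‖ ≤ C) :
    Tendsto x atTop (nhds xstar) := by
  obtain ⟨C, hC⟩ := hbdd
  rcases Nat.eq_zero_or_pos d with hd | hd
  · subst hd
    have hx0 : x = fun _ => xstar := funext fun n => PiLp.ext fun i => i.elim0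
    rw [hx0]
    exact tendsto_const_nhds
  haveI : Nonempty (Fin d) := ⟨⟨0, hd⟩⟩
  have hd0 : ((d : ℝ)) ≠ 0 := Nat.cast_ne_zero.mpr hd.ne'
  -- Every limit point of a subsequence of `x` is `xstar`.
  have key : ∀ (y : EuclideanSpace ℝ (Fin d)) (φ : ℕ → ℕ), Tendsto φ atTop atTop →
      Tendsto (fun j => x (φ j)) atTop (nhds y) → y = xstar := by
    intro y φ hφ hlim
    set e : Fin d → EuclideanSpace ℝ (Fin d) := fun i => EuclideanSpace.single i (1 : ℝ) with he
    set M : ℝ := 1 + Finset.univ.sup' Finset.univ_nonempty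
      (fun i : Fin d => max (g (y + (d : ℝ) • e i)) (g (y - (d : ℝ) • e i))) with hMdef
    -- f n is eventually bounded by M at the 2d "vertex" points around y
    have hvert : ∀ᶠ n in atTop, ∀ i : Fin d,
        f n (y + (d : ℝ) • e i) ≤ M ∧ f n (y - (d : ℝ) • e i) ≤ M := by
      rw [eventually_all]
      intro i
      have h1 : ∀ᶠ n in atTop, f n (y + (d : ℝ) • e i) ≤ g (y + (d : ℝ) • e i) + 1 :=
        (hpt _).eventually (eventually_le_nhds (lt_add_one _))
      have h2 : ∀ᶠ n in atTop, f n (y - (d : ℝ) • e i) ≤ g (y - (d : ℝ) • e i) + 1 :=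
        (hpt _).eventually (eventually_le_nhds (lt_add_one _))
      filter_upwards [h1, h2] with n hn1 hn2
      constructor
      · refine hn1.trans ?_
        rw [hMdef, add_comm]
        gcongr
        exact Finset.le_sup'
          (fun i : Fin d => max (g (y + (d : ℝ) • e i)) (g (y - (d : ℝ) • e i)))
          (Finset.mem_univ i) |>.trans' (le_max_left _ _)
      · refine hn2.trans ?_
        rw [hMdef, add_comm]
        gcongr
        exact Finset.le_sup'
          (fun i : Fin d => max (g (y + (d : ℝ) • e i)) (g (y - (d : ℝ) • e i)))
          (Finset.mem_univ i) |>.trans' (le_max_right _ _)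
    -- hence f n is eventually bounded by M on the closed unit ball around y
    have hball : ∀ᶠ n in atTop, ∀ w ∈ Metric.closedBall y 1, f n w ≤ M := by
      filter_upwards [hvert] with n hn w hw
      have hw1 : ‖w - y‖ ≤ 1 := by rwa [Metric.mem_closedBall, dist_eq_norm] at hw
      have hpmem : ∀ i : Fin d, f n (y + ((d : ℝ) * (w - y) i) • e i) ≤ M := by
        intro i
        have hdpos : (0 : ℝ) < d := Nat.cast_pos.mpr hd
        have hcoord : |(w - y) i| ≤ 1 := (abs_coord_le_norm' _ i).trans hw1
        set c : ℝ := (d : ℝ) * (w - y) i with hc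
        have hcabs : |c| ≤ (d : ℝ) := by
          rw [hc, abs_mul, Nat.abs_cast]
          calc (d : ℝ) * |(w - y) i| ≤ (d : ℝ) * 1 := by gcongr
            _ = d := mul_one _
        have hcle : c ≤ (d : ℝ) := (le_abs_self c).trans hcabs
        have hcge : -(d : ℝ) ≤ c := neg_le_of_neg_le ((neg_le_abs c).trans hcabs)
        have ha : (0 : ℝ) ≤ ((d : ℝ) - c) / (2 * d) := by
          apply div_nonneg (by linarith) (by positivity)
        have hb : (0 : ℝ) ≤ ((d : ℝ) + c) / (2 * d) := by
          apply div_nonneg (by linarith) (by positivity)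
        have hab : ((d : ℝ) - c) / (2 * d) + ((d : ℝ) + c) / (2 * d) = 1 := by
          field_simp
          ring
        have hrep : y + c • e i = (((d : ℝ) - c) / (2 * d)) • (y - (d : ℝ) • e i)
            + (((d : ℝ) + c) / (2 * d)) • (y + (d : ℝ) • e i) := by
          match_scalars <;> field_simp <;> ring
        calc f n (y + c • e i)
            ≤ max (f n (y - (d : ℝ) • e i)) (f n (y + (d : ℝ) • e i)) := by
              rw [hrep]
              exact (hconv n).le_on_segment' trivial trivial ha hb hab
          _ ≤ M := max_le (hn i).2 (hn i).1
      calc f n w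
          = f n (∑ i : Fin d, ((d : ℝ)⁻¹) • (y + ((d : ℝ) * (w - y) i) • e i)) := by
            exact congrArg (f n) (rep_sum' hd y w)
        _ ≤ ∑ i : Fin d, ((d : ℝ)⁻¹) • f n (y + ((d : ℝ) * (w - y) i) • e i) :=
            (hconv n).map_sum_le (fun i _ => by positivity)
              (by rw [Finset.sum_const, Finset.card_univ, Fintype.card_fin, nsmul_eq_mul,
                    mul_inv_cancel₀ hd0])
              (fun i _ => trivial)
        _ ≤ ∑ i : Fin d, ((d : ℝ)⁻¹) • M :=
            Finset.sum_le_sum fun i _ =>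
              smul_le_smul_of_nonneg_left (hpmem i) (by positivity)
        _ = M := by
            rw [Finset.sum_const, Finset.card_univ, Fintype.card_fin, smul_eq_mul,
              nsmul_eq_mul, ← mul_assoc, mul_inv_cancel₀ hd0, one_mul]
    -- distance to y tends to zero
    have hdist : Tendsto (fun j => ‖x (φ j) - y‖) atTop (nhds 0) := by
      have h := hlim.sub (tendsto_const_nhds (x := y))
      rw [sub_self] at h
      simpa using h.norm
    -- y minimizes g
    apply huniq
    intro z
    have hlow : ∀ᶠ j in atTop,
        f (φ j) y + ‖x (φ j) - y‖ * (f (φ j) y - M) ≤ f (φ j) z := by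
      filter_upwards [hφ.eventually hball,
        hdist.eventually (eventually_le_nhds (by norm_num : (0 : ℝ) < 1))] with j hb hj1
      set n := φ j with hn
      have hxz : f n (x n) ≤ f n z := hx n z
      rcases eq_or_ne (x n) y with hxy | hxy
      · have h0 : ‖x n - y‖ = 0 := by simp [hxy]
        rw [h0]
        rw [hxy] at hxz
        linarith
      · set t : ℝ := ‖x n - y‖ with htdef
        have ht0 : 0 < t := by
          rw [htdef, norm_pos_iff]
          exact sub_ne_zero.mpr hxy
        have h1t : (0 : ℝ) < 1 + t := by linarith
        set wpt : EuclideanSpace ℝ (Fin d) := y - t⁻¹ • (x n - y) with hwpt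
        have hwmem : wpt ∈ Metric.closedBall y 1 := by
          rw [Metric.mem_closedBall, dist_eq_norm, hwpt]
          have : y - t⁻¹ • (x n - y) - y = -(t⁻¹ • (x n - y)) := by abel
          rw [this, norm_neg, norm_smul, norm_inv, Real.norm_eq_abs, abs_of_pos ht0,
            inv_mul_cancel₀ ht0.ne']
        have hwM : f n wpt ≤ M := hb _ hwmem
        have hcomb : y = (1 / (1 + t)) • x n + (t / (1 + t)) • wpt := by
          rw [hwpt]
          match_scalars <;> (field_simp; try ring)
        have hineq : f n y ≤ (1 / (1 + t)) • f n (x n) + (t / (1 + t)) • f n wpt := by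
          conv_lhs => rw [hcomb]
          exact (hconv n).2 (Set.mem_univ _) (Set.mem_univ _) (by positivity) (by positivity)
            (by field_simp)
        have h2 : (1 + t) * f n y ≤ f n (x n) + t * f n wpt := by
          have h3 := mul_le_mul_of_nonneg_left hineq h1t.le
          calc (1 + t) * f n y
              ≤ (1 + t) * ((1 / (1 + t)) • f n (x n) + (t / (1 + t)) • f n wpt) := h3
            _ = f n (x n) + t * f n wpt := by
                rw [smul_eq_mul, smul_eq_mul]
                field_simp
        have h4 : t * f n wpt ≤ t * M := mul_le_mul_of_nonneg_left hwM ht0.le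
        have h5 : f n y + t * (f n y - M) ≤ f n (x n) := by nlinarith
        linarith
    have hfy : Tendsto (fun j => f (φ j) y) atTop (nhds (g y)) := (hpt y).comp hφ
    have hL : Tendsto (fun j => f (φ j) y + ‖x (φ j) - y‖ * (f (φ j) y - M)) atTop
        (nhds (g y)) := by
      have := hfy.add (hdist.mul (hfy.sub (tendsto_const_nhds (x := M))))
      simpa using this
    have hR : Tendsto (fun j => f (φ j) z) atTop (nhds (g z)) := (hpt z).comp hφ
    exact le_of_tendsto_of_tendsto hL hR hlow
  -- conclude via Bolzano–Weierstrass and the subsequence criterion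
  apply tendsto_of_subseq_tendsto
  intro ns hns
  have hmem : ∀ n, x (ns n) ∈ Metric.closedBall (0 : EuclideanSpace ℝ (Fin d)) C := fun n => by
    simpa [Metric.mem_closedBall, dist_eq_norm] using hC (ns n)
  obtain ⟨y, -, ms, hms, hy⟩ :=
    tendsto_subseq_of_bounded Metric.isBounded_closedBall hmem
  refine ⟨ms, ?_⟩
  have hy' : Tendsto (fun j => x (ns (ms j))) atTop (nhds y) := hy
  have hyx : y = xstar := key y (ns ∘ ms) (hns.comp hms.tendsto_atTop) hy'
  rwa [hyx] at hy'
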